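/- Let P and Q be probability measures on a measurable space generated by an increasing sequence of finite sub-σ-algebras F_n, and let g_n = dQ_n/dP_n be the Radon–Nikodym derivative of the restrictions to F_n (assume P_n gives positive mass to all atoms). Then (g_n) is a nonnegative P-martingale, and Q is absolutely continuous with respect to P if and only if g_n converges P-almost surely to a limit g with E_P[g] = 1. -/

import Mathlib

open MeasureTheory Filter Topology

/-- Let `P, Q` be probability measures on a space whose σ-algebra is generated by an
increasing sequence of finite sub-σ-algebras `ℱ n` on whose nonempty measurable sets `P` is
positive, and let `g n` be the Radon–Nikodym derivative of the restrictions of `Q` and `P`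
to `ℱ n`. Then `(g n)` is a nonnegative `P`-martingale, and `Q ≪ P` iff `g n` converges
`P`-a.s. to a limit with `P`-integral `1`. -/
theorem stmt_10 {α : Type*} {m : MeasurableSpace α}
    (P Q : Measure α) [IsProbabilityMeasure P] [IsProbabilityMeasure Q]
    (ℱ : Filtration ℕ m)
    (hgen : (⨆ n, (ℱ n : MeasurableSpace α)) = m)
    (hfin : ∀ n, {s : Set α | MeasurableSet[ℱ n] s}.Finite)
    (hatoms : ∀ n (s : Set α), MeasurableSet[ℱ n] s → s.Nonempty → 0 < P s)
    (g : ℕ → α → ℝ)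
    (hg : ∀ n, g n = fun ω => ((Q.trim (ℱ.le n)).rnDeriv (P.trim (ℱ.le n)) ω).toReal) :
    Martingale g ℱ P ∧ (∀ n, 0 ≤ᵐ[P] g n) ∧
      (Q ≪ P ↔ ∃ gl : α → ℝ,
        (∀ᵐ ω ∂P, Tendsto (fun n => g n ω) atTop (𝓝 (gl ω))) ∧
        ∫ ω, gl ω ∂P = 1) := by
  -- nonnegativity (pointwise)
  have hnn : ∀ n ω, 0 ≤ g n ω := fun n ω => by rw [hg n]; exact ENNReal.toReal_nonneg
  -- absolute continuity of trims
  have hQPn : ∀ n, Q.trim (ℱ.le n) ≪ P.trim (ℱ.le n) := by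
    intro n
    refine Measure.AbsolutelyContinuous.mk fun s hs h0 => ?_
    rw [trim_measurableSet_eq _ hs] at h0 ⊢
    rcases s.eq_empty_or_nonempty with rfl | hne
    · simp
    · exact absurd h0 (hatoms n s hs hne).ne'
  -- measurability
  have hmeas : ∀ n, StronglyMeasurable[ℱ n] (g n) := fun n => by
    rw [hg n]
    exact (Measure.measurable_rnDeriv _ _).ennreal_toReal.stronglyMeasurable
  -- integrability
  have hint : ∀ n, Integrable (g n) P := by
    intro n
    refine integrable_of_integrable_trim (ℱ.le n) ?_
    rw [hg n]
    exact Measure.integrable_toReal_rnDeriv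
  -- key set-integral identity
  have key : ∀ n (s : Set α), MeasurableSet[ℱ n] s →
      ∫ ω in s, g n ω ∂P = (Q s).toReal := by
    intro n s hs
    rw [hg n, setIntegral_trim (ℱ.le n)
        (Measure.measurable_rnDeriv _ _).ennreal_toReal.stronglyMeasurable hs,
      Measure.setIntegral_toReal_rnDeriv (hQPn n) s, measureReal_def, trim_measurableSet_eq _ hs]
  -- the martingale property
  have hmart : Martingale g ℱ P := by
    refine ⟨fun n => hmeas n, fun i j hij => ?_⟩
    refine (ae_eq_condExp_of_forall_setIntegral_eq (ℱ.le i) (hint j)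
      (fun s _ _ => (hint i).integrableOn) (fun s hs _ => ?_)
      ((hmeas i).aestronglyMeasurable)).symm
    rw [key i s hs, key j s (ℱ.mono hij s hs)]
  -- ENNReal version of the key identity
  have keyl : ∀ n (s : Set α), MeasurableSet[ℱ n] s →
      ∫⁻ ω in s, ENNReal.ofReal (g n ω) ∂P = Q s := by
    intro n s hs
    rw [← ofReal_integral_eq_lintegral_ofReal ((hint n).integrableOn)
      (Eventually.of_forall fun ω => hnn n ω), key n s hs,
      ENNReal.ofReal_toReal (measure_ne_top Q s)]
  refine ⟨hmart, fun n => Eventually.of_forall fun ω => hnn n ω, ?_, ?_⟩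
  · -- forward direction: Q ≪ P implies a.s. convergence with integral 1
    intro hQP
    set f : α → ℝ := fun ω => (Q.rnDeriv P ω).toReal with hf
    have hfint : Integrable f P := Measure.integrable_toReal_rnDeriv
    have hfmeas : StronglyMeasurable[⨆ n, (ℱ n : MeasurableSpace α)] f := by
      rw [hgen]
      exact (Measure.measurable_rnDeriv _ _).ennreal_toReal.stronglyMeasurable
    have hcond : ∀ n, g n =ᵐ[P] P[f|ℱ n] := by
      intro n
      refine ae_eq_condExp_of_forall_setIntegral_eq (ℱ.le n) hfint
        (fun s _ _ => (hint n).integrableOn) (fun s hs _ => ?_)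
        ((hmeas n).aestronglyMeasurable)
      rw [key n s hs, Measure.setIntegral_toReal_rnDeriv hQP s, measureReal_def]
    have hlevy := hfint.tendsto_ae_condExp hfmeas
    refine ⟨f, ?_, ?_⟩
    · filter_upwards [hlevy, ae_all_iff.2 hcond] with ω hω hω'
      exact hω.congr fun n => (hω' n).symm
    · rw [hf, Measure.integral_toReal_rnDeriv hQP]
      simp
  · -- backward direction
    rintro ⟨gl, hconv, hint1⟩
    have hglae : AEMeasurable gl P :=
      aemeasurable_of_tendsto_metrizable_ae atTop
        (fun n => ((hmeas n).measurable.mono (ℱ.le n) le_rfl).aemeasurable) hconv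
    set gl' : α → ℝ := hglae.mk gl with hgl'
    have hglm : Measurable gl' := hglae.measurable_mk
    have hgleq : gl =ᵐ[P] gl' := hglae.ae_eq_mk
    have hconv' : ∀ᵐ ω ∂P, Tendsto (fun n => g n ω) atTop (𝓝 (gl' ω)) := by
      filter_upwards [hconv, hgleq] with ω h1 h2
      rwa [h2] at h1
    have hnn' : 0 ≤ᵐ[P] gl' := by
      filter_upwards [hconv'] with ω hω
      exact ge_of_tendsto' hω fun n => hnn n ω
    set μ : Measure α := P.withDensity (fun ω => ENNReal.ofReal (gl' ω)) with hμ
    -- Fatou on sets in the filtration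
    have hfatou : ∀ n (s : Set α), MeasurableSet[ℱ n] s → μ s ≤ Q s := by
      intro n s hs
      rw [hμ, withDensity_apply _ (ℱ.le n s hs)]
      have h1 : ∫⁻ ω in s, ENNReal.ofReal (gl' ω) ∂P
          ≤ atTop.liminf fun k => ∫⁻ ω in s, ENNReal.ofReal (g k ω) ∂P := by
        refine le_trans (le_of_eq (lintegral_congr_ae ?_)) (lintegral_liminf_le
          fun k => ((hmeas k).measurable.mono (ℱ.le k) le_rfl).ennreal_ofReal)
        filter_upwards [ae_restrict_of_ae hconv'] with ω hω
        exact ((ENNReal.continuous_ofReal.tendsto _).comp hω).liminf_eq.symm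
      refine h1.trans (le_of_eq ?_)
      have h2 : ∀ k, n ≤ k → ∫⁻ ω in s, ENNReal.ofReal (g k ω) ∂P = Q s :=
        fun k hk => keyl k s (ℱ.mono hk s hs)
      have h3 : Tendsto (fun k => ∫⁻ ω in s, ENNReal.ofReal (g k ω) ∂P) atTop (𝓝 (Q s)) :=
        tendsto_const_nhds.congr' (eventually_atTop.2 ⟨n, fun k hk => (h2 k hk).symm⟩)
      exact h3.liminf_eq
    -- total mass of μ is 1
    have hμuniv : μ Set.univ = 1 := by
      have hglint : Integrable gl' P := (integrable_congr hgleq).mp ?_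
      · rw [hμ, withDensity_apply _ MeasurableSet.univ, Measure.restrict_univ,
          ← ofReal_integral_eq_lintegral_ofReal hglint hnn',
          ← integral_congr_ae hgleq, hint1, ENNReal.ofReal_one]
      · -- gl is integrable since gl' is dominated via Fatou
        refine (integrable_congr hgleq).mpr ?_
        refine ⟨hglm.aestronglyMeasurable, ?_⟩
        rw [hasFiniteIntegral_iff_norm]
        have : ∫⁻ ω, ENNReal.ofReal ‖gl' ω‖ ∂P = ∫⁻ ω, ENNReal.ofReal (gl' ω) ∂P := by
          refine lintegral_congr_ae ?_
          filter_upwards [hnn'] with ω hω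
          rw [Real.norm_of_nonneg hω]
        rw [this]
        calc ∫⁻ ω, ENNReal.ofReal (gl' ω) ∂P
            ≤ Q Set.univ := by
              have := hfatou 0 Set.univ MeasurableSet.univ
              rwa [hμ, withDensity_apply _ MeasurableSet.univ, Measure.restrict_univ] at this
          _ < ⊤ := measure_lt_top Q _
    haveI : IsFiniteMeasure μ := ⟨by rw [hμuniv]; exact ENNReal.one_lt_top⟩
    -- μ agrees with Q on every set of the filtration
    have hμQ : ∀ n (s : Set α), MeasurableSet[ℱ n] s → Q s = μ s := by
      intro n s hs
      have hsc : MeasurableSet[ℱ n] sᶜ := hs.compl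
      have h1 : μ s + μ sᶜ = Q s + Q sᶜ := by
        rw [measure_add_measure_compl (ℱ.le n s hs),
          measure_add_measure_compl (ℱ.le n s hs), hμuniv, measure_univ]
      refine le_antisymm ?_ (hfatou n s hs)
      have h2 : Q s + Q sᶜ ≤ μ s + Q sᶜ := by
        rw [← h1]
        exact add_le_add_right (hfatou n sᶜ hsc) _
      exact (ENNReal.add_le_add_iff_right (measure_ne_top Q sᶜ)).mp h2
    -- conclude Q = μ via the π-system of filtration-measurable sets
    have hQeq : Q = μ := by
      refine ext_of_generate_finite (⋃ n, {s : Set α | MeasurableSet[ℱ n] s}) ?_ ?_ ?_ ?_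
      · exact hgen.symm.trans (MeasurableSpace.generateFrom_iUnion_measurableSet _).symm
      · rintro s hs t ht -
        obtain ⟨_, ⟨i, rfl⟩, hsi⟩ := hs
        obtain ⟨_, ⟨j, rfl⟩, htj⟩ := ht
        exact Set.mem_iUnion.2 ⟨max i j, (ℱ.mono (le_max_left i j) s hsi).inter
          (ℱ.mono (le_max_right i j) t htj)⟩
      · rintro s hs
        obtain ⟨_, ⟨i, rfl⟩, hsi⟩ := hs
        exact hμQ i s hsi
      · rw [hμuniv, measure_univ]
    rw [hQeq]
    exact withDensity_absolutelyContinuous P _
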